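/- Let F be a field with char F ≠ 2, and consider O(2m+1, F) with respect to a nondegenerate symmetric bilinear form that is block diagonal with a 2-dimensional block and a (2m-1)-dimensional block. The centralizer in O(2m+1, F) of a = diag(-I₂, I_{2m-1}) is isomorphic to O(2, F) × O(2m-1, F), where each factor is the orthogonal group of the restricted form. Consequently, if O(2m+1, F) is acceptable then O(2m-1, F) is acceptable. -/

import Mathlib

/-- A group `G` is *acceptable* if for every finite group `H`, any two element-conjugate
homomorphisms `H → G` are globally conjugate. -/
def IsAcceptable (G : Type*) [Group G] : Prop :=
  ∀ (H : Type) (_ : Group H) (_ : Finite H) (φ₁ φ₂ : H →* G),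
    (∀ h : H, ∃ g : G, g * φ₁ h * g⁻¹ = φ₂ h) →
    ∃ g : G, ∀ h : H, g * φ₁ h * g⁻¹ = φ₂ h


open Matrix

/-- The subgroup of `GL n F` preserving the bilinear form with Gram matrix `J`,
i.e. matrices `A` with `ᵗA J A = J`. -/
def formGroup {n : Type*} [Fintype n] [DecidableEq n] {F : Type*} [Field F]
    (J : Matrix n n F) : Subgroup (GL n F) where
  carrier := {A | (A : Matrix n n F)ᵀ * J * (A : Matrix n n F) = J}
  one_mem' := by simp
  mul_mem' := by
    intro A B hA hB
    simp only [Set.mem_setOf_eq] at *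
    have hc : ((A * B : GL n F) : Matrix n n F) = (A : Matrix n n F) * B := rfl
    rw [hc, transpose_mul]
    calc (B : Matrix n n F)ᵀ * (A : Matrix n n F)ᵀ * J * ((A : Matrix n n F) * B)
        = (B : Matrix n n F)ᵀ * ((A : Matrix n n F)ᵀ * J * A) * B := by
          simp only [Matrix.mul_assoc]
      _ = J := by rw [hA]; exact hB
  inv_mem' := by
    intro A hA
    simp only [Set.mem_setOf_eq] at *
    have h1 : ((A : GL n F) : Matrix n n F) * ((A⁻¹ : GL n F) : Matrix n n F) = 1 :=
      A.mul_inv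
    calc ((A⁻¹ : GL n F) : Matrix n n F)ᵀ * J * ((A⁻¹ : GL n F) : Matrix n n F)
        = ((A⁻¹ : GL n F) : Matrix n n F)ᵀ * ((A : Matrix n n F)ᵀ * J * A) *
            ((A⁻¹ : GL n F) : Matrix n n F) := by rw [hA]
      _ = (((A : GL n F) : Matrix n n F) * ((A⁻¹ : GL n F) : Matrix n n F))ᵀ *
            (J * (((A : GL n F) : Matrix n n F) * ((A⁻¹ : GL n F) : Matrix n n F))) := by
          rw [transpose_mul]; simp only [Matrix.mul_assoc]
      _ = J := by rw [h1]; simp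

theorem isAcceptable_of_mulEquiv {G G' : Type*} [Group G] [Group G'] (e : G ≃* G')
    (hG : IsAcceptable G) : IsAcceptable G' := by
  intro H hH hF φ₁ φ₂ hel
  obtain ⟨g, hg⟩ := hG H hH hF (e.symm.toMonoidHom.comp φ₁) (e.symm.toMonoidHom.comp φ₂)
    (fun h => by
      obtain ⟨g, hg⟩ := hel h
      exact ⟨e.symm g, by simpa [_root_.map_mul, _root_.map_inv] using congrArg e.symm hg⟩)
  exact ⟨e g, fun h => by simpa [_root_.map_mul, _root_.map_inv] using congrArg e (hg h)⟩

theorem isAcceptable_prod_right {G₁ G₂ : Type*} [Group G₁] [Group G₂]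
    (h : IsAcceptable (G₁ × G₂)) : IsAcceptable G₂ := by
  intro H hH hF φ₁ φ₂ hel
  obtain ⟨g, hg⟩ := h H hH hF ((1 : H →* G₁).prod φ₁) ((1 : H →* G₁).prod φ₂)
    (fun h' => by
      obtain ⟨g, hg⟩ := hel h'
      exact ⟨(1, g), by simp [Prod.ext_iff, hg]⟩)
  exact ⟨g.2, fun h' => by simpa using congrArg Prod.snd (hg h')⟩

theorem isAcceptable_centralizer {G : Type*} [Group G] (hG : IsAcceptable G) (a : G)
    (ha : a * a = 1) : IsAcceptable (Subgroup.centralizer ({a} : Set G)) := by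
  have hpow2 : a ^ 2 = 1 := by rw [pow_two, ha]
  have hpow : ∀ p : ℕ, a ^ p = a ^ (p % 2) := by
    intro p
    conv_lhs => rw [← Nat.div_add_mod p 2]
    rw [pow_add, pow_mul, hpow2, one_pow, one_mul]
  have hcomm : ∀ x : Subgroup.centralizer ({a} : Set G), Commute a (x : G) := fun x =>
    (Subgroup.mem_centralizer_iff.mp x.2) a (Set.mem_singleton a)
  intro H hH hF φ₁ φ₂ hel
  let ψ : (H →* Subgroup.centralizer ({a} : Set G)) → (H × Multiplicative (ZMod 2)) →* G :=
    fun φ =>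
    { toFun := fun p => (φ p.1 : G) * a ^ (Multiplicative.toAdd p.2).val
      map_one' := by simp
      map_mul' := by
        intro p q
        have h1 : ((φ (p * q).1 : G)) = (φ p.1 : G) * (φ q.1 : G) := by
          rw [Prod.fst_mul, _root_.map_mul]; rfl
        have h2 : a ^ (Multiplicative.toAdd (p * q).2).val
            = a ^ (Multiplicative.toAdd p.2).val * a ^ (Multiplicative.toAdd q.2).val := by
          rw [← pow_add]
          have h : Multiplicative.toAdd (p * q).2
              = Multiplicative.toAdd p.2 + Multiplicative.toAdd q.2 := rfl
          rw [h, ZMod.val_add, ← hpow]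
        have h3 : Commute (a ^ (Multiplicative.toAdd p.2).val) ((φ q.1 : G)) :=
          ((hcomm (φ q.1)).pow_left _)
        show (φ (p * q).1 : G) * a ^ (Multiplicative.toAdd (p * q).2).val = _
        rw [h1, h2, h3.mul_mul_mul_comm] }
  obtain ⟨g, hg⟩ := hG (H × Multiplicative (ZMod 2)) _ inferInstance (ψ φ₁) (ψ φ₂)
    (fun p => by
      obtain ⟨c, hc⟩ := hel p.1
      refine ⟨(c : G), ?_⟩
      have hcx : Commute ((c : G)) (a ^ (Multiplicative.toAdd p.2).val) :=
        ((hcomm c).symm.pow_right _)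
      show (c : G) * ((φ₁ p.1 : G) * a ^ (Multiplicative.toAdd p.2).val) * (c : G)⁻¹
          = (φ₂ p.1 : G) * a ^ (Multiplicative.toAdd p.2).val
      have hc' : (c : G) * (φ₁ p.1 : G) * (c : G)⁻¹ = (φ₂ p.1 : G) := by
        have := congrArg (Subtype.val) hc
        simpa using this
      calc (c : G) * ((φ₁ p.1 : G) * a ^ (Multiplicative.toAdd p.2).val) * (c : G)⁻¹
          = (c : G) * (φ₁ p.1 : G) * (a ^ (Multiplicative.toAdd p.2).val * (c : G)⁻¹) := by
            group
        _ = (c : G) * (φ₁ p.1 : G) * ((c : G)⁻¹ * a ^ (Multiplicative.toAdd p.2).val) := by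
            rw [← hcx.inv_left.eq]
        _ = ((c : G) * (φ₁ p.1 : G) * (c : G)⁻¹) * a ^ (Multiplicative.toAdd p.2).val := by
            group
        _ = (φ₂ p.1 : G) * a ^ (Multiplicative.toAdd p.2).val := by rw [hc'])
  -- g centralizes a
  have hga : g * a * g⁻¹ = a := by
    have := hg (1, Multiplicative.ofAdd 1)
    have h1 : ((1 : ZMod 2)).val = 1 := rfl
    simpa [ψ, h1] using this
  have hgmem : g ∈ Subgroup.centralizer ({a} : Set G) := by
    rw [Subgroup.mem_centralizer_iff]
    rintro y ⟨rfl⟩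
    have : g * a = a * g := by
      conv_rhs => rw [← hga]
      group
    exact this.symm
  refine ⟨⟨g, hgmem⟩, fun h => ?_⟩
  have := hg (h, 1)
  have h0 : (Multiplicative.toAdd (1 : Multiplicative (ZMod 2))).val = 0 := rfl
  simp only [ψ, MonoidHom.coe_mk, OneHom.coe_mk, h0, pow_zero, mul_one] at this
  ext
  simpa using this


open Matrix

section Blocks
variable {F : Type} [Field F] {κ ι : Type} [Fintype κ] [DecidableEq κ] [Fintype ι] [DecidableEq ι]

/-- block diagonal element of `GL (κ ⊕ ι) F` -/
def blockGL (A : GL κ F) (D : GL ι F) : GL (κ ⊕ ι) F where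
  val := fromBlocks (A : Matrix κ κ F) 0 0 (D : Matrix ι ι F)
  inv := fromBlocks ((A⁻¹ : GL κ F) : Matrix κ κ F) 0 0 ((D⁻¹ : GL ι F) : Matrix ι ι F)
  val_inv := by
    rw [fromBlocks_multiply]
    simp only [Matrix.mul_zero, Matrix.zero_mul, add_zero, zero_add, Units.mul_inv,
      ← fromBlocks_one]
  inv_val := by
    rw [fromBlocks_multiply]
    simp only [Matrix.mul_zero, Matrix.zero_mul, add_zero, zero_add, Units.inv_mul,
      ← fromBlocks_one]

@[simp] lemma blockGL_coe (A : GL κ F) (D : GL ι F) :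
    ((blockGL A D : GL (κ ⊕ ι) F) : Matrix (κ ⊕ ι) (κ ⊕ ι) F)
      = fromBlocks (A : Matrix κ κ F) 0 0 (D : Matrix ι ι F) := rfl

lemma blockGL_mul (A A' : GL κ F) (D D' : GL ι F) :
    blockGL (A * A') (D * D') = blockGL A D * blockGL A' D' := by
  ext : 1
  show fromBlocks ((A * A' : GL κ F) : Matrix κ κ F) 0 0 ((D * D' : GL ι F) : Matrix ι ι F)
    = fromBlocks (A : Matrix κ κ F) 0 0 (D : Matrix ι ι F)
      * fromBlocks (A' : Matrix κ κ F) 0 0 (D' : Matrix ι ι F)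
  rw [fromBlocks_multiply]
  simp
end Blocks

section Iso
variable {F : Type} [Field F] {κ ι : Type} [Fintype κ] [DecidableEq κ] [Fintype ι] [DecidableEq ι]
variable (J₂ : Matrix κ κ F) (J' : Matrix ι ι F)

lemma blockGL_mem (A : GL κ F) (D : GL ι F) (hA : A ∈ formGroup J₂) (hD : D ∈ formGroup J') :
    blockGL A D ∈ formGroup (fromBlocks J₂ 0 0 J' : Matrix (κ ⊕ ι) (κ ⊕ ι) F) := by
  show (fromBlocks (A : Matrix κ κ F) 0 0 (D : Matrix ι ι F))ᵀ * fromBlocks J₂ 0 0 J'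
      * fromBlocks (A : Matrix κ κ F) 0 0 (D : Matrix ι ι F) = fromBlocks J₂ 0 0 J'
  rw [fromBlocks_transpose, fromBlocks_multiply, fromBlocks_multiply]
  simp only [transpose_zero, Matrix.mul_zero, Matrix.zero_mul, add_zero, zero_add]
  rw [hA, hD]

lemma centralizer_iso (hchar : (2 : F) ≠ 0)
    (a : formGroup (fromBlocks J₂ 0 0 J' : Matrix (κ ⊕ ι) (κ ⊕ ι) F))
    (ha : ((a : GL (κ ⊕ ι) F) : Matrix (κ ⊕ ι) (κ ⊕ ι) F) = fromBlocks (-1) 0 0 1) :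
    Nonempty ((Subgroup.centralizer ({a} :
        Set (formGroup (fromBlocks J₂ 0 0 J' : Matrix (κ ⊕ ι) (κ ⊕ ι) F))))
      ≃* formGroup J₂ × formGroup J') := by
  let G := formGroup (fromBlocks J₂ 0 0 J' : Matrix (κ ⊕ ι) (κ ⊕ ι) F)
  -- the homomorphism from the product into the centralizer
  have hcent : ∀ (A : GL κ F) (D : GL ι F) (hA : A ∈ formGroup J₂) (hD : D ∈ formGroup J'),
      (⟨blockGL A D, blockGL_mem J₂ J' A D hA hD⟩ : G) ∈
        Subgroup.centralizer ({a} : Set G) := by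
    intro A D hA hD
    rw [Subgroup.mem_centralizer_iff]
    rintro y ⟨rfl⟩
    apply Subtype.ext
    apply Units.ext
    show ((a : GL (κ ⊕ ι) F) : Matrix (κ ⊕ ι) (κ ⊕ ι) F)
        * fromBlocks (A : Matrix κ κ F) 0 0 (D : Matrix ι ι F)
      = fromBlocks (A : Matrix κ κ F) 0 0 (D : Matrix ι ι F)
        * ((a : GL (κ ⊕ ι) F) : Matrix (κ ⊕ ι) (κ ⊕ ι) F)
    rw [ha, fromBlocks_multiply, fromBlocks_multiply]
    simp
  let Φ : formGroup J₂ × formGroup J' →* Subgroup.centralizer ({a} : Set G) :=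
    { toFun := fun p => ⟨⟨blockGL p.1.1 p.2.1, blockGL_mem J₂ J' _ _ p.1.2 p.2.2⟩,
        hcent _ _ p.1.2 p.2.2⟩
      map_one' := by
        apply Subtype.ext; apply Subtype.ext; apply Units.ext
        show fromBlocks ((1 : GL κ F) : Matrix κ κ F) 0 0 ((1 : GL ι F) : Matrix ι ι F)
          = ((1 : GL (κ ⊕ ι) F) : Matrix (κ ⊕ ι) (κ ⊕ ι) F)
        simp [← fromBlocks_one]
      map_mul' := by
        intro p q
        apply Subtype.ext; apply Subtype.ext
        show blockGL (p.1.1 * q.1.1) (p.2.1 * q.2.1) = blockGL p.1.1 p.2.1 * blockGL q.1.1 q.2.1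
        exact blockGL_mul _ _ _ _ }
  have hinj : Function.Injective Φ := by
    intro p q hpq
    have h1 : (blockGL p.1.1 p.2.1 : Matrix (κ ⊕ ι) (κ ⊕ ι) F)
        = (blockGL q.1.1 q.2.1 : Matrix (κ ⊕ ι) (κ ⊕ ι) F) :=
      congrArg (fun x => x.1.1.1) hpq
    rw [blockGL_coe, blockGL_coe] at h1
    have h11 := congrArg Matrix.toBlocks₁₁ h1
    have h22 := congrArg Matrix.toBlocks₂₂ h1
    simp only [toBlocks_fromBlocks₁₁, toBlocks_fromBlocks₂₂] at h11 h22
    rw [Prod.ext_iff]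
    exact ⟨Subtype.ext (Units.ext h11), Subtype.ext (Units.ext h22)⟩
  have hsurj : Function.Surjective Φ := by
    intro b
    obtain ⟨A, B, C, D, hX⟩ : ∃ A B C D, b.1.1.1 = fromBlocks A B C D :=
      ⟨_, _, _, _, (fromBlocks_toBlocks b.1.1.1).symm⟩
    obtain ⟨A', B', C', D', hX'⟩ : ∃ A' B' C' D', b.1.1.inv = fromBlocks A' B' C' D' :=
      ⟨_, _, _, _, (fromBlocks_toBlocks b.1.1.inv).symm⟩
    have h := (Subgroup.mem_centralizer_iff.mp b.2) a (Set.mem_singleton a)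
    have hMX : ((a : GL (κ ⊕ ι) F) : Matrix (κ ⊕ ι) (κ ⊕ ι) F) * b.1.1.1
        = b.1.1.1 * ((a : GL (κ ⊕ ι) F) : Matrix (κ ⊕ ι) (κ ⊕ ι) F) :=
      congrArg (fun x => x.1.1) h
    rw [ha, hX, fromBlocks_multiply, fromBlocks_multiply] at hMX
    simp only [Matrix.mul_zero, Matrix.zero_mul, Matrix.mul_one, Matrix.one_mul,
      Matrix.mul_neg, Matrix.neg_mul, Matrix.mul_one, add_zero, zero_add] at hMX
    -- hMX : fromBlocks (-A) (-B) C D = fromBlocks (-A) B (-C) D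
    have offdiag_zero : ∀ (Y : Matrix κ ι F), Y = -Y → Y = 0 := by
      intro Y hY
      ext i j
      have h1 : Y i j = - Y i j := by
        have := congrFun (congrFun hY i) j
        simpa using this
      have h2 : (2 : F) * Y i j = 0 := by linear_combination h1
      rcases mul_eq_zero.mp h2 with h | h
      · exact absurd h hchar
      · simpa using h
    have offdiag_zero' : ∀ (Y : Matrix ι κ F), Y = -Y → Y = 0 := by
      intro Y hY
      ext i j
      have h1 : Y i j = - Y i j := by
        have := congrFun (congrFun hY i) j
        simpa using this
      have h2 : (2 : F) * Y i j = 0 := by linear_combination h1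
      rcases mul_eq_zero.mp h2 with h | h
      · exact absurd h hchar
      · simpa using h
    have hB12 := congrArg Matrix.toBlocks₁₂ hMX
    have hC21 := congrArg Matrix.toBlocks₂₁ hMX
    simp only [toBlocks_fromBlocks₁₂, toBlocks_fromBlocks₂₁] at hB12 hC21
    have hB0 : B = 0 := offdiag_zero B (neg_eq_iff_eq_neg.mp hB12)
    have hC0 : C = 0 := offdiag_zero' C hC21
    -- the inverse also commutes with a
    have hMX' : ((a : GL (κ ⊕ ι) F) : Matrix (κ ⊕ ι) (κ ⊕ ι) F) * b.1.1.inv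
        = b.1.1.inv * ((a : GL (κ ⊕ ι) F) : Matrix (κ ⊕ ι) (κ ⊕ ι) F) := by
      have h' := (Subgroup.mem_centralizer_iff.mp (b⁻¹).2) a (Set.mem_singleton a)
      exact congrArg (fun x => x.1.1) h'
    rw [ha, hX', fromBlocks_multiply, fromBlocks_multiply] at hMX'
    simp only [Matrix.mul_zero, Matrix.zero_mul, Matrix.mul_one, Matrix.one_mul,
      Matrix.mul_neg, Matrix.neg_mul, Matrix.mul_one, add_zero, zero_add] at hMX'
    have hB12' := congrArg Matrix.toBlocks₁₂ hMX'
    have hC21' := congrArg Matrix.toBlocks₂₁ hMX'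
    simp only [toBlocks_fromBlocks₁₂, toBlocks_fromBlocks₂₁] at hB12' hC21'
    have hB0' : B' = 0 := offdiag_zero B' (neg_eq_iff_eq_neg.mp hB12')
    have hC0' : C' = 0 := offdiag_zero' C' hC21'
    rw [hB0, hC0] at hX
    rw [hB0', hC0'] at hX'
    -- products of blocks
    have hXX' : b.1.1.1 * b.1.1.inv = 1 := b.1.1.val_inv
    have hX'X : b.1.1.inv * b.1.1.1 = 1 := b.1.1.inv_val
    rw [hX, hX', fromBlocks_multiply, ← fromBlocks_one] at hXX' hX'X
    simp only [Matrix.mul_zero, Matrix.zero_mul, add_zero, zero_add] at hXX' hX'X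
    have hAA' := congrArg Matrix.toBlocks₁₁ hXX'
    have hDD' := congrArg Matrix.toBlocks₂₂ hXX'
    have hA'A := congrArg Matrix.toBlocks₁₁ hX'X
    have hD'D := congrArg Matrix.toBlocks₂₂ hX'X
    simp only [toBlocks_fromBlocks₁₁, toBlocks_fromBlocks₂₂] at hAA' hDD' hA'A hD'D
    let Au : GL κ F := ⟨A, A', hAA', hA'A⟩
    let Du : GL ι F := ⟨D, D', hDD', hD'D⟩
    -- memberships
    have hmem : b.1.1.1ᵀ * fromBlocks J₂ 0 0 J' * b.1.1.1 = fromBlocks J₂ 0 0 J' := b.1.2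
    rw [hX, fromBlocks_transpose, fromBlocks_multiply, fromBlocks_multiply] at hmem
    simp only [transpose_zero, Matrix.mul_zero, Matrix.zero_mul, add_zero, zero_add] at hmem
    have hAmem : Au ∈ formGroup J₂ := by
      have := congrArg Matrix.toBlocks₁₁ hmem
      simp only [toBlocks_fromBlocks₁₁] at this
      exact this
    have hDmem : Du ∈ formGroup J' := by
      have := congrArg Matrix.toBlocks₂₂ hmem
      simp only [toBlocks_fromBlocks₂₂] at this
      exact this
    refine ⟨(⟨Au, hAmem⟩, ⟨Du, hDmem⟩), ?_⟩
    apply Subtype.ext; apply Subtype.ext; apply Units.ext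
    exact hX.symm
  exact ⟨(MulEquiv.ofBijective Φ ⟨hinj, hsurj⟩).symm⟩
end Iso


theorem O_odd_acceptable_descends (F : Type) [Field F] (hchar : (2 : F) ≠ 0)
    (m : ℕ) (hm : 1 ≤ m)
    (J₂ : Matrix (Fin 2) (Fin 2) F) (hJ₂ : J₂ᵀ = J₂) (hJ₂' : IsUnit J₂)
    (J' : Matrix (Fin (2 * m - 1)) (Fin (2 * m - 1)) F) (hJ' : J'ᵀ = J') (hJ'' : IsUnit J') :
    (∀ a : formGroup (Matrix.fromBlocks J₂ 0 0 J' :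
        Matrix (Fin 2 ⊕ Fin (2 * m - 1)) (Fin 2 ⊕ Fin (2 * m - 1)) F),
      ((a : GL (Fin 2 ⊕ Fin (2 * m - 1)) F) :
          Matrix (Fin 2 ⊕ Fin (2 * m - 1)) (Fin 2 ⊕ Fin (2 * m - 1)) F) =
        Matrix.fromBlocks (-1) 0 0 1 →
      Nonempty ((Subgroup.centralizer
          ({a} : Set (formGroup (Matrix.fromBlocks J₂ 0 0 J' :
            Matrix (Fin 2 ⊕ Fin (2 * m - 1)) (Fin 2 ⊕ Fin (2 * m - 1)) F))))
        ≃* formGroup J₂ × formGroup J')) ∧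
    (IsAcceptable (formGroup (Matrix.fromBlocks J₂ 0 0 J' :
        Matrix (Fin 2 ⊕ Fin (2 * m - 1)) (Fin 2 ⊕ Fin (2 * m - 1)) F)) →
      IsAcceptable (formGroup J')) := by
  constructor
  · intro a ha
    exact centralizer_iso J₂ J' hchar a ha
  · intro hAcc
    -- construct the element a = diag(-1, 1)
    have hMM : (fromBlocks (-1) 0 0 1 : Matrix (Fin 2 ⊕ Fin (2 * m - 1))
          (Fin 2 ⊕ Fin (2 * m - 1)) F)
        * fromBlocks (-1) 0 0 1 = 1 := by
      rw [fromBlocks_multiply]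
      simp [← fromBlocks_one]
    let aGL : GL (Fin 2 ⊕ Fin (2 * m - 1)) F :=
      ⟨fromBlocks (-1) 0 0 1, fromBlocks (-1) 0 0 1, hMM, hMM⟩
    have hamem : aGL ∈ formGroup (fromBlocks J₂ 0 0 J' :
        Matrix (Fin 2 ⊕ Fin (2 * m - 1)) (Fin 2 ⊕ Fin (2 * m - 1)) F) := by
      show (fromBlocks (-1) 0 0 1 : Matrix (Fin 2 ⊕ Fin (2 * m - 1))
          (Fin 2 ⊕ Fin (2 * m - 1)) F)ᵀ * fromBlocks J₂ 0 0 J' * fromBlocks (-1) 0 0 1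
        = fromBlocks J₂ 0 0 J'
      rw [fromBlocks_transpose, fromBlocks_multiply, fromBlocks_multiply]
      simp
    let a : formGroup (fromBlocks J₂ 0 0 J' :
        Matrix (Fin 2 ⊕ Fin (2 * m - 1)) (Fin 2 ⊕ Fin (2 * m - 1)) F) := ⟨aGL, hamem⟩
    have ha2 : a * a = 1 := by
      apply Subtype.ext; apply Units.ext
      exact hMM
    obtain ⟨e⟩ := centralizer_iso J₂ J' hchar a rfl
    exact isAcceptable_prod_right (isAcceptable_of_mulEquiv e
      (isAcceptable_centralizer hAcc a ha2))
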